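/- arXiv:2302.04083 — 3 statements merged into one kernel-verified Lean document; each statement's English description precedes it below -/
import Mathlib

section
/- Let W ∈ ℝ^{m×m} be a symmetric matrix satisfying W·1 = 1, let P := (1/m)·1·1ᵀ, and suppose λ := ‖W − P‖ (ℓ2 operator norm) satisfies λ < 1. Let (Zᵗ)_{t≥0} be matrices in ℝ^{m×d}, define X⁰ = 0 and Xᵗ⁺¹ = W Zᵗ, and suppose that ‖Xʲ − Zʲ‖_F² ≤ m B² for every j ≥ 0, where ‖·‖_F is the Frobenius norm and B ≥ 0. Then for every t ≥ 0, denoting by xᵗ(i) the i-th row of Xᵗ and by x̄ᵗ := (1/m)∑_{i=1}^m xᵗ(i) the row average, one has (1/m)∑_{i=1}^m ‖xᵗ(i) − x̄ᵗ‖² ≤ B²/(1−λ)². -/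
open scoped Matrix

/-- The ℓ2 operator norm of a real square matrix. -/
noncomputable def l2OpNorm {m : ℕ} (A : Matrix (Fin m) (Fin m) ℝ) : ℝ :=
  ‖Matrix.toEuclideanCLM (𝕜 := ℝ) A‖

/-- The averaging matrix `P := (1/m)·1·1ᵀ`. -/
noncomputable def avgMatrix (m : ℕ) : Matrix (Fin m) (Fin m) ℝ :=
  (m : ℝ)⁻¹ • Matrix.vecMulVec (fun _ => (1 : ℝ)) (fun _ => (1 : ℝ))

/-- Embed an `m × d` matrix into Euclidean space on `Fin m × Fin d`,
so its Euclidean norm is the Frobenius norm. -/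
noncomputable def matEuc {m d : ℕ} (A : Matrix (Fin m) (Fin d) ℝ) :
    EuclideanSpace ℝ (Fin m × Fin d) :=
  (WithLp.equiv 2 _).symm (fun p => A p.1 p.2)

lemma matEuc_add {m d : ℕ} (A B : Matrix (Fin m) (Fin d) ℝ) :
    matEuc (A + B) = matEuc A + matEuc B := rfl

lemma matEuc_sq {m d : ℕ} (A : Matrix (Fin m) (Fin d) ℝ) :
    ‖matEuc A‖ ^ 2 = ∑ i, ∑ k, (A i k) ^ 2 := by
  rw [EuclideanSpace.norm_eq, Real.sq_sqrt (by positivity)]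
  rw [Fintype.sum_prod_type]
  simp [Real.norm_eq_abs, sq_abs, matEuc]

lemma sq_le_imp_le {a b : ℝ} (ha : 0 ≤ a) (hb : 0 ≤ b) (h : a ^ 2 ≤ b ^ 2) :
    a ≤ b := by
  have := Real.sqrt_le_sqrt h
  rwa [Real.sqrt_sq ha, Real.sqrt_sq hb] at this

lemma opBound {m d : ℕ} (M : Matrix (Fin m) (Fin m) ℝ)
    (A : Matrix (Fin m) (Fin d) ℝ) :
    ‖matEuc (M * A)‖ ≤ l2OpNorm M * ‖matEuc A‖ := by
  have hL : 0 ≤ l2OpNorm M := norm_nonneg _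
  refine sq_le_imp_le (norm_nonneg _) (by positivity) ?_
  rw [mul_pow, matEuc_sq, matEuc_sq,
    show (∑ i, ∑ k, ((M * A) i k) ^ 2) = ∑ k, ∑ i, ((M * A) i k) ^ 2 from
      Finset.sum_comm,
    show (∑ i, ∑ k, (A i k) ^ 2) = ∑ k, ∑ i, (A i k) ^ 2 from Finset.sum_comm,
    Finset.mul_sum]
  refine Finset.sum_le_sum fun k _ => ?_
  set v : EuclideanSpace ℝ (Fin m) := (WithLp.equiv 2 _).symm (fun i => A i k)
    with hv
  have h1 : ∑ i, ((M * A) i k) ^ 2 = ‖Matrix.toEuclideanCLM (𝕜 := ℝ) M v‖ ^ 2 := by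
    rw [hv, WithLp.equiv_symm_apply, Matrix.toEuclideanCLM_toLp, EuclideanSpace.norm_eq,
      Real.sq_sqrt (by positivity)]
    refine Finset.sum_congr rfl fun i _ => ?_
    rw [Real.norm_eq_abs, sq_abs]
    congr 1
  have h2 : ∑ i, (A i k) ^ 2 = ‖v‖ ^ 2 := by
    rw [hv, EuclideanSpace.norm_eq, Real.sq_sqrt (by positivity)]
    refine Finset.sum_congr rfl fun i _ => ?_
    rw [Real.norm_eq_abs, sq_abs]
    rfl
  rw [h1, h2]
  calc ‖Matrix.toEuclideanCLM (𝕜 := ℝ) M v‖ ^ 2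
      ≤ (l2OpNorm M * ‖v‖) ^ 2 := by
        have := (Matrix.toEuclideanCLM (𝕜 := ℝ) M).le_opNorm v
        exact pow_le_pow_left₀ (norm_nonneg _) this 2
    _ = l2OpNorm M ^ 2 * ‖v‖ ^ 2 := by ring

/-- deterministic core of Lemma D.4 of the paper, the
consensus-error bound for DFedSAM. If `W` is symmetric with `W·1 = 1`,
`λ := ‖W - P‖ < 1`, `X⁰ = 0`, `Xᵗ⁺¹ = W Zᵗ`, and the per-round drift satisfies
`‖Xʲ - Zʲ‖_F² ≤ m B²` for all `j`, then for every `t`, the average squared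
deviation of the rows `xᵗ(i)` of `Xᵗ` from their average `x̄ᵗ` satisfies
`(1/m) ∑ᵢ ‖xᵗ(i) - x̄ᵗ‖² ≤ B²/(1-λ)²`. -/
theorem consensus_error_bound_DFedSAM (m d : ℕ) (hm : 1 ≤ m) (hd : 1 ≤ d)
    (W : Matrix (Fin m) (Fin m) ℝ) (hsymm : W.IsSymm)
    (hW1 : W.mulVec (fun _ => (1 : ℝ)) = fun _ => (1 : ℝ))
    (hlam : l2OpNorm (W - avgMatrix m) < 1)
    (B : ℝ) (hB : 0 ≤ B)
    (Z X : ℕ → Matrix (Fin m) (Fin d) ℝ)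
    (hX0 : X 0 = 0) (hXrec : ∀ t : ℕ, X (t + 1) = W * Z t)
    (hdrift : ∀ j : ℕ, ∑ i, ∑ k, (X j i k - Z j i k) ^ 2 ≤ (m : ℝ) * B ^ 2) :
    ∀ t : ℕ,
      (m : ℝ)⁻¹ * ∑ i, ∑ k, (X t i k - (m : ℝ)⁻¹ * ∑ i', X t i' k) ^ 2 ≤
        B ^ 2 / (1 - l2OpNorm (W - avgMatrix m)) ^ 2 := by
  have hm0 : (0 : ℝ) < m := by exact_mod_cast hm
  have hmne : (m : ℝ) ≠ 0 := ne_of_gt hm0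
  set P : Matrix (Fin m) (Fin m) ℝ := avgMatrix m with hP
  set L : ℝ := l2OpNorm (W - P) with hLdef
  have hL0 : 0 ≤ L := norm_nonneg _
  have h1L : 0 < 1 - L := by linarith
  -- entries of P
  have hPent : ∀ i j, P i j = (m : ℝ)⁻¹ := by
    intro i j
    simp [hP, avgMatrix, Matrix.vecMulVec_apply]
  -- row sums of W are 1
  have hrow : ∀ i, ∑ j, W i j = 1 := by
    intro i
    have := congrFun hW1 i
    simpa [Matrix.mulVec, dotProduct] using this
  -- column sums of W are 1
  have hcol : ∀ j, ∑ i, W i j = 1 := by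
    intro j
    have : ∀ i, W i j = W j i := fun i => by
      conv_lhs => rw [← hsymm]
      rfl
    simp_rw [this]
    exact hrow j
  have hPW : P * W = P := by
    ext i k
    simp only [Matrix.mul_apply, hPent]
    rw [← Finset.mul_sum, hcol]
    ring
  have hWP : W * P = P := by
    ext i k
    simp only [Matrix.mul_apply, hPent]
    rw [← Finset.sum_mul, hrow]
    ring
  have hPP : P * P = P := by
    ext i k
    simp only [Matrix.mul_apply, hPent]
    rw [Finset.sum_const, Finset.card_univ, Fintype.card_fin, nsmul_eq_mul]
    field_simp
  -- the consensus error matrix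
  set E : ℕ → Matrix (Fin m) (Fin d) ℝ := fun t => X t - P * X t with hE
  have hErec : ∀ t, E (t + 1) = (W - P) * E t + (W - P) * (Z t - X t) := by
    intro t
    have h1 : E (t + 1) = (W - P) * Z t := by
      rw [hE]
      simp only [hXrec t, ← Matrix.mul_assoc, hPW, Matrix.sub_mul]
    have h2 : (W - P) * E t + (W - P) * (Z t - X t) = (W - P) * Z t := by
      rw [hE]
      simp only [← Matrix.mul_add]
      have : X t - P * X t + (Z t - X t) = Z t - P * X t := by abel
      rw [this]
      have hz : (W - P) * P = 0 := by
        rw [Matrix.sub_mul, hWP, hPP, sub_self]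
      rw [Matrix.mul_sub, ← Matrix.mul_assoc, hz, Matrix.zero_mul, sub_zero]
    rw [h1, h2]
  -- drift bound in norm form
  set c : ℝ := Real.sqrt m * B with hc
  have hc0 : 0 ≤ c := by positivity
  have hdriftE : ∀ t, ‖matEuc (Z t - X t)‖ ≤ c := by
    intro t
    refine sq_le_imp_le (norm_nonneg _) hc0 ?_
    rw [matEuc_sq, hc, mul_pow, Real.sq_sqrt hm0.le]
    calc ∑ i, ∑ k, (Z t i k - X t i k) ^ 2
        = ∑ i, ∑ k, (X t i k - Z t i k) ^ 2 := by
          refine Finset.sum_congr rfl fun i _ => Finset.sum_congr rfl fun k _ => ?_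
          rw [← neg_sub, neg_sq]
      _ ≤ (m : ℝ) * B ^ 2 := hdrift t
  -- main induction
  have hind : ∀ t, ‖matEuc (E t)‖ ≤ L * c / (1 - L) := by
    intro t
    induction t with
    | zero =>
        have : E 0 = 0 := by
          rw [hE]; simp [hX0]
        rw [this]
        have : matEuc (0 : Matrix (Fin m) (Fin d) ℝ) = 0 := rfl
        rw [this, norm_zero]
        positivity
    | succ t ih =>
        rw [hErec t]
        calc ‖matEuc ((W - P) * E t + (W - P) * (Z t - X t))‖
            ≤ ‖matEuc ((W - P) * E t)‖ + ‖matEuc ((W - P) * (Z t - X t))‖ := by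
              rw [matEuc_add]; exact norm_add_le _ _
          _ ≤ L * ‖matEuc (E t)‖ + L * ‖matEuc (Z t - X t)‖ :=
              add_le_add (opBound _ _) (opBound _ _)
          _ ≤ L * (L * c / (1 - L)) + L * c := by
              gcongr
              exact hdriftE t
          _ = L * c / (1 - L) := by
              field_simp
              ring
  intro t
  -- rewrite LHS via E
  have hentry : ∀ i k, X t i k - (m : ℝ)⁻¹ * ∑ i', X t i' k = E t i k := by
    intro i k
    rw [hE]
    simp only [Matrix.sub_apply, Matrix.mul_apply, hPent]
    rw [← Finset.mul_sum]
  have hLHS : ∑ i, ∑ k, (X t i k - (m : ℝ)⁻¹ * ∑ i', X t i' k) ^ 2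
      = ‖matEuc (E t)‖ ^ 2 := by
    rw [matEuc_sq]
    exact Finset.sum_congr rfl fun i _ => Finset.sum_congr rfl fun k _ => by
      rw [hentry i k]
  rw [hLHS]
  have hnorm2 : ‖matEuc (E t)‖ ^ 2 ≤ (L * c / (1 - L)) ^ 2 :=
    pow_le_pow_left₀ (norm_nonneg _) (hind t) 2
  have hval : (m : ℝ)⁻¹ * (L * c / (1 - L)) ^ 2 = L ^ 2 * B ^ 2 / (1 - L) ^ 2 := by
    rw [hc]
    rw [div_pow, mul_pow, mul_pow, Real.sq_sqrt hm0.le]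
    field_simp
  calc (m : ℝ)⁻¹ * ‖matEuc (E t)‖ ^ 2
      ≤ (m : ℝ)⁻¹ * (L * c / (1 - L)) ^ 2 := by
        exact mul_le_mul_of_nonneg_left hnorm2 (by positivity)
    _ = L ^ 2 * B ^ 2 / (1 - L) ^ 2 := hval
    _ ≤ B ^ 2 / (1 - L) ^ 2 := by
        have hL2 : L ^ 2 ≤ 1 := by nlinarith
        exact div_le_div₀ (by positivity) (by nlinarith) (by positivity) le_rfl
end

section
/- Let W ∈ ℝ^{m×m} be a symmetric matrix satisfying W·1 = 1, let P := (1/m)·1·1ᵀ, suppose λ := ‖W − P‖ (ℓ2 operator norm) satisfies λ < 1, and let Q ≥ 1 be an integer. Let (Zᵗ)_{t≥0} be matrices in ℝ^{m×d}, define X⁰ = 0 and Xᵗ⁺¹ = W^Q Zᵗ, and suppose that ‖Xʲ − Zʲ‖_F² ≤ m B² for every j ≥ 0, where ‖·‖_F is the Frobenius norm and B ≥ 0. Then for every t ≥ 0, denoting by xᵗ(i) the i-th row of Xᵗ and by x̄ᵗ := (1/m)∑_{i=1}^m xᵗ(i) the row average, one has (1/m)∑_{i=1}^m ‖xᵗ(i)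 − x̄ᵗ‖² ≤ B² · ( (λ^Q + 1)/((1−λ)² m^{2(Q−1)}) + (λ^Q + 1)/(1−λ^Q)² ). -/
open scoped Matrix

noncomputable def emb {m d : ℕ} (M : Matrix (Fin m) (Fin d) ℝ) :
    EuclideanSpace ℝ (Fin m × Fin d) :=
  (WithLp.equiv 2 _).symm (fun p => M p.1 p.2)

lemma emb_add {m d : ℕ} (M N : Matrix (Fin m) (Fin d) ℝ) :
    emb (M + N) = emb M + emb N := rfl

lemma emb_sq {m d : ℕ} (M : Matrix (Fin m) (Fin d) ℝ) :
    ‖emb M‖ ^ 2 = ∑ i, ∑ k, (M i k) ^ 2 := by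
  rw [EuclideanSpace.norm_eq, Real.sq_sqrt (by positivity)]
  simp only [emb, WithLp.equiv_symm_apply, PiLp.toLp_apply, Real.norm_eq_abs, sq_abs]
  exact Fintype.sum_prod_type (f := fun p => M p.1 p.2 ^ 2)

lemma normsq_vec {m : ℕ} (v : Fin m → ℝ) :
    ‖((WithLp.equiv 2 (Fin m → ℝ)).symm v : EuclideanSpace ℝ (Fin m))‖ ^ 2 = ∑ i, (v i) ^ 2 := by
  rw [EuclideanSpace.norm_eq, Real.sq_sqrt (by positivity)]
  simp [sq_abs]

lemma l2OpNorm_nonneg {m : ℕ} (A : Matrix (Fin m) (Fin m) ℝ) : 0 ≤ l2OpNorm A :=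
  norm_nonneg _

lemma emb_mul_le {m d : ℕ} (A : Matrix (Fin m) (Fin m) ℝ) (M : Matrix (Fin m) (Fin d) ℝ) :
    ‖emb (A * M)‖ ≤ l2OpNorm A * ‖emb M‖ := by
  have key : ‖emb (A * M)‖ ^ 2 ≤ (l2OpNorm A * ‖emb M‖) ^ 2 := by
    rw [emb_sq, mul_pow, emb_sq, Finset.sum_comm (γ := Fin m) (α := Fin d),
      Finset.sum_comm (γ := Fin m) (α := Fin d), Finset.mul_sum]
    refine Finset.sum_le_sum fun k _ => ?_
    have h1 : (∑ i, ((A * M) i k) ^ 2)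
        = ‖Matrix.toEuclideanCLM (𝕜 := ℝ) A
            ((WithLp.equiv 2 (Fin m → ℝ)).symm (fun j => M j k))‖ ^ 2 := by
      rw [WithLp.equiv_symm_apply, Matrix.toEuclideanCLM_toLp, ← WithLp.equiv_symm_apply, normsq_vec]
      exact Finset.sum_congr rfl fun i _ => by
        simp [Matrix.mul_apply, Matrix.mulVec, dotProduct]
    rw [h1]
    have h2 := (Matrix.toEuclideanCLM (𝕜 := ℝ) A).le_opNorm
      ((WithLp.equiv 2 (Fin m → ℝ)).symm (fun j => M j k))
    calc ‖Matrix.toEuclideanCLM (𝕜 := ℝ) A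
            ((WithLp.equiv 2 (Fin m → ℝ)).symm (fun j => M j k))‖ ^ 2
        ≤ (l2OpNorm A * ‖((WithLp.equiv 2 (Fin m → ℝ)).symm (fun j => M j k) :
            EuclideanSpace ℝ (Fin m))‖) ^ 2 := by
          exact pow_le_pow_left₀ (norm_nonneg _) h2 2
      _ = l2OpNorm A ^ 2 * ∑ i, (M i k) ^ 2 := by rw [mul_pow, normsq_vec]
  have h := Real.sqrt_le_sqrt key
  rwa [Real.sqrt_sq (norm_nonneg _), Real.sqrt_sq (mul_nonneg (l2OpNorm_nonneg A) (norm_nonneg _))] at h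

lemma l2OpNorm_pow_le {m : ℕ} (A : Matrix (Fin m) (Fin m) ℝ) {n : ℕ} (hn : 1 ≤ n) :
    l2OpNorm (A ^ n) ≤ (l2OpNorm A) ^ n := by
  unfold l2OpNorm
  rw [map_pow]
  exact norm_pow_le' _ hn

/-- deterministic core of Lemma D.5 of the paper, the
consensus-error bound with `Q` gossip steps per round. If `W` is symmetric
with `W·1 = 1`, `λ := ‖W - P‖ < 1`, `Q ≥ 1`, `X⁰ = 0`, `Xᵗ⁺¹ = W^Q Zᵗ`, and
`‖Xʲ - Zʲ‖_F² ≤ m B²` for all `j`, then for every `t`,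
`(1/m) ∑ᵢ ‖xᵗ(i) - x̄ᵗ‖² ≤ B²·((λ^Q+1)/((1-λ)² m^{2(Q-1)}) + (λ^Q+1)/(1-λ^Q)²)`. -/
theorem consensus_error_bound_DFedSAM_MGS (m d : ℕ) (hm : 1 ≤ m) (hd : 1 ≤ d)
    (W : Matrix (Fin m) (Fin m) ℝ) (hsymm : W.IsSymm)
    (hW1 : W.mulVec (fun _ => (1 : ℝ)) = fun _ => (1 : ℝ))
    (hlam : l2OpNorm (W - avgMatrix m) < 1)
    (Q : ℕ) (hQ : 1 ≤ Q)
    (B : ℝ) (hB : 0 ≤ B)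
    (Z X : ℕ → Matrix (Fin m) (Fin d) ℝ)
    (hX0 : X 0 = 0) (hXrec : ∀ t : ℕ, X (t + 1) = W ^ Q * Z t)
    (hdrift : ∀ j : ℕ, ∑ i, ∑ k, (X j i k - Z j i k) ^ 2 ≤ (m : ℝ) * B ^ 2) :
    ∀ t : ℕ,
      (m : ℝ)⁻¹ * ∑ i, ∑ k, (X t i k - (m : ℝ)⁻¹ * ∑ i', X t i' k) ^ 2 ≤
        B ^ 2 * (((l2OpNorm (W - avgMatrix m)) ^ Q + 1) /
            ((1 - l2OpNorm (W - avgMatrix m)) ^ 2 * (m : ℝ) ^ (2 * (Q - 1))) +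
          ((l2OpNorm (W - avgMatrix m)) ^ Q + 1) /
            (1 - (l2OpNorm (W - avgMatrix m)) ^ Q) ^ 2) := by
  have hm0 : (0 : ℝ) < m := by exact_mod_cast Nat.lt_of_lt_of_le Nat.zero_lt_one hm
  set lam := l2OpNorm (W - avgMatrix m) with hlamdef
  have hlam0 : 0 ≤ lam := l2OpNorm_nonneg _
  have hq0 : 0 ≤ lam ^ Q := pow_nonneg hlam0 Q
  have hq1 : lam ^ Q < 1 := pow_lt_one₀ hlam0 hlam (by omega)
  have hden : 0 < 1 - lam ^ Q := by linarith
  have havg : ∀ i j, avgMatrix m i j = (m : ℝ)⁻¹ := by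
    intro i j
    simp [avgMatrix, Matrix.vecMulVec_apply, Matrix.smul_apply]
  have hrow : ∀ i, ∑ j, W i j = 1 := by
    intro i
    have h := congrFun hW1 i
    simpa [Matrix.mulVec, dotProduct] using h
  have hWP : W * avgMatrix m = avgMatrix m := by
    ext i j
    rw [Matrix.mul_apply]
    simp only [havg]
    rw [← Finset.sum_mul, hrow i, one_mul]
  have hPW : avgMatrix m * W = avgMatrix m := by
    ext i j
    rw [Matrix.mul_apply]
    simp only [havg]
    rw [← Finset.mul_sum]
    have hcol : ∑ k, W k j = 1 := by
      have : ∀ k, W k j = W j k := fun k => hsymm.apply j k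
      rw [Finset.sum_congr rfl fun k _ => this k, hrow j]
    rw [hcol, mul_one]
  have hPP : avgMatrix m * avgMatrix m = avgMatrix m := by
    ext i j
    rw [Matrix.mul_apply]
    simp only [havg]
    rw [Finset.sum_const, Finset.card_univ, Fintype.card_fin, nsmul_eq_mul]
    field_simp
  have hpowP : ∀ n : ℕ, W ^ n * avgMatrix m = avgMatrix m := by
    intro n
    induction n with
    | zero => simp
    | succ n ih => rw [pow_succ, mul_assoc, hWP, ih]
  have hPpow : ∀ n : ℕ, avgMatrix m * W ^ n = avgMatrix m := by
    intro n
    induction n with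
    | zero => simp
    | succ n ih => rw [pow_succ, ← mul_assoc, ih, hPW]
  have hApow : ∀ n : ℕ, 1 ≤ n → (W - avgMatrix m) ^ n = W ^ n - avgMatrix m := by
    intro n hn
    induction n, hn using Nat.le_induction with
    | base => rw [pow_one, pow_one]
    | succ n hn ih =>
      rw [pow_succ, ih, pow_succ, sub_mul, mul_sub, mul_sub, hpowP n, hPW, hPP]
      abel
  have hAQP : (W - avgMatrix m) ^ Q * avgMatrix m = 0 := by
    rw [hApow Q hQ, sub_mul, hpowP Q, hPP, sub_self]
  set Y : ℕ → Matrix (Fin m) (Fin d) ℝ := fun t => X t - avgMatrix m * X t with hYdef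
  have hYrec : ∀ t : ℕ,
      Y (t + 1) = (W - avgMatrix m) ^ Q * (Z t - X t) + (W - avgMatrix m) ^ Q * Y t := by
    intro t
    have h1 : Y (t + 1) = (W - avgMatrix m) ^ Q * Z t := by
      show X (t + 1) - avgMatrix m * X (t + 1) = _
      rw [hXrec t, ← Matrix.mul_assoc, hPpow Q, hApow Q hQ, Matrix.sub_mul]
    rw [h1]
    simp only [hYdef]
    rw [Matrix.mul_sub, Matrix.mul_sub, ← Matrix.mul_assoc, hAQP, Matrix.zero_mul, sub_zero]
    abel
  set D : ℝ := Real.sqrt m * B with hDdef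
  have hD0 : 0 ≤ D := mul_nonneg (Real.sqrt_nonneg _) hB
  have hD2 : D ^ 2 = (m : ℝ) * B ^ 2 := by
    rw [hDdef, mul_pow, Real.sq_sqrt hm0.le]
  have hZX : ∀ t : ℕ, ‖emb (Z t - X t)‖ ≤ D := by
    intro t
    have hsq : ‖emb (Z t - X t)‖ ^ 2 ≤ D ^ 2 := by
      rw [emb_sq, hD2]
      calc ∑ i, ∑ k, ((Z t - X t) i k) ^ 2
          = ∑ i, ∑ k, (X t i k - Z t i k) ^ 2 := by
            refine Finset.sum_congr rfl fun i _ => Finset.sum_congr rfl fun k _ => ?_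
            rw [Matrix.sub_apply]; ring
        _ ≤ (m : ℝ) * B ^ 2 := hdrift t
    have h := Real.sqrt_le_sqrt hsq
    rwa [Real.sqrt_sq (norm_nonneg _), Real.sqrt_sq hD0] at h
  have hAQle : l2OpNorm ((W - avgMatrix m) ^ Q) ≤ lam ^ Q := l2OpNorm_pow_le _ hQ
  have key : ∀ t : ℕ, ‖emb (Y t)‖ ≤ lam ^ Q * D / (1 - lam ^ Q) := by
    intro t
    induction t with
    | zero =>
      have hY0 : Y 0 = 0 := by rw [hYdef]; simp [hX0]
      rw [hY0]
      have : emb (0 : Matrix (Fin m) (Fin d) ℝ) = 0 := rfl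
      rw [this, norm_zero]
      exact div_nonneg (mul_nonneg hq0 hD0) hden.le
    | succ t ih =>
      have hstep : ‖emb (Y (t + 1))‖ ≤ lam ^ Q * (D + ‖emb (Y t)‖) := by
        rw [hYrec t, emb_add]
        calc ‖emb ((W - avgMatrix m) ^ Q * (Z t - X t)) +
              emb ((W - avgMatrix m) ^ Q * Y t)‖
            ≤ ‖emb ((W - avgMatrix m) ^ Q * (Z t - X t))‖ +
              ‖emb ((W - avgMatrix m) ^ Q * Y t)‖ := norm_add_le _ _
          _ ≤ l2OpNorm ((W - avgMatrix m) ^ Q) * ‖emb (Z t - X t)‖ +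
              l2OpNorm ((W - avgMatrix m) ^ Q) * ‖emb (Y t)‖ :=
              add_le_add (emb_mul_le _ _) (emb_mul_le _ _)
          _ ≤ lam ^ Q * ‖emb (Z t - X t)‖ + lam ^ Q * ‖emb (Y t)‖ :=
              add_le_add (mul_le_mul_of_nonneg_right hAQle (norm_nonneg _))
                (mul_le_mul_of_nonneg_right hAQle (norm_nonneg _))
          _ ≤ lam ^ Q * D + lam ^ Q * ‖emb (Y t)‖ := by
              have := mul_le_mul_of_nonneg_left (hZX t) hq0
              linarith
          _ = lam ^ Q * (D + ‖emb (Y t)‖) := by ring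
      calc ‖emb (Y (t + 1))‖ ≤ lam ^ Q * (D + ‖emb (Y t)‖) := hstep
        _ ≤ lam ^ Q * (D + lam ^ Q * D / (1 - lam ^ Q)) := by
            have := mul_le_mul_of_nonneg_left ih hq0
            nlinarith
        _ ≤ lam ^ Q * D / (1 - lam ^ Q) := by
            have hx : D + lam ^ Q * D / (1 - lam ^ Q) = D / (1 - lam ^ Q) := by
              field_simp
              ring
            rw [hx]
            exact le_of_eq (mul_div_assoc _ _ _).symm
  intro t
  have hsum : ∑ i, ∑ k, (X t i k - (m : ℝ)⁻¹ * ∑ i', X t i' k) ^ 2 = ‖emb (Y t)‖ ^ 2 := by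
    rw [emb_sq]
    refine Finset.sum_congr rfl fun i _ => Finset.sum_congr rfl fun k _ => ?_
    congr 1
    rw [hYdef]
    show X t i k - (m : ℝ)⁻¹ * ∑ i', X t i' k = (X t - avgMatrix m * X t) i k
    rw [Matrix.sub_apply, Matrix.mul_apply]
    simp only [havg]
    rw [← Finset.mul_sum]
  rw [hsum]
  have h1 : ‖emb (Y t)‖ ^ 2 ≤ (lam ^ Q * D / (1 - lam ^ Q)) ^ 2 :=
    pow_le_pow_left₀ (norm_nonneg _) (key t) 2
  have heq : (m : ℝ)⁻¹ * (lam ^ Q * D / (1 - lam ^ Q)) ^ 2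
      = B ^ 2 * ((lam ^ Q) ^ 2 / (1 - lam ^ Q) ^ 2) := by
    rw [div_pow, mul_pow, hD2]
    field_simp
  have hT1 : 0 ≤ (lam ^ Q + 1) / ((1 - lam) ^ 2 * (m : ℝ) ^ (2 * (Q - 1))) :=
    div_nonneg (by linarith) (mul_nonneg (sq_nonneg _) (pow_nonneg hm0.le _))
  have hT2 : (lam ^ Q) ^ 2 / (1 - lam ^ Q) ^ 2 ≤ (lam ^ Q + 1) / (1 - lam ^ Q) ^ 2 := by
    have h2 : (lam ^ Q) ^ 2 ≤ lam ^ Q + 1 := by nlinarith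
    gcongr
  calc (m : ℝ)⁻¹ * ‖emb (Y t)‖ ^ 2
      ≤ (m : ℝ)⁻¹ * (lam ^ Q * D / (1 - lam ^ Q)) ^ 2 :=
        mul_le_mul_of_nonneg_left h1 (inv_nonneg.mpr hm0.le)
    _ = B ^ 2 * ((lam ^ Q) ^ 2 / (1 - lam ^ Q) ^ 2) := heq
    _ ≤ B ^ 2 * ((lam ^ Q + 1) / ((1 - lam) ^ 2 * (m : ℝ) ^ (2 * (Q - 1))) +
        (lam ^ Q + 1) / (1 - lam ^ Q) ^ 2) := by
        apply mul_le_mul_of_nonneg_left ?_ (sq_nonneg B)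
        linarith
end

section
/- Let E be a real inner product space, let f : E → ℝ be differentiable with an L-Lipschitz gradient, and let x₁,…,x_m ∈ E with average x̄ := (1/m)∑_{i=1}^m xᵢ. Let η ≥ 0, K ≥ 0, C₃ ≥ 0 and λ ∈ [0,1), set G := (1/m)∑_{i=1}^m ‖∇f(xᵢ)‖², and suppose that (1/m)∑_{i=1}^m ‖xᵢ − x̄‖² ≤ (η²/(1−λ)²)·(C₃ + 16K²G) and that (1−λ)² > 32L²η²K². Then G ≤ (2L²C₃η² + 2(1−λ)²‖∇f(x̄)‖²) / ((1−λ)² − 32L²η²K²). -/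
set_option maxHeartbeats 1000000 in
/-- the self-bounding resolution step, equation (24), in the
proof of Theorem 4 of the paper. Let `f : E → ℝ` be differentiable with an
`L`-Lipschitz gradient, `x₁,…,x_m` points with average `x̄`, and set
`G := (1/m)∑ᵢ ‖∇f(xᵢ)‖²`. If the consensus error satisfies
`(1/m)∑ᵢ ‖xᵢ - x̄‖² ≤ (η²/(1-λ)²)(C₃ + 16K²G)` and `(1-λ)² > 32L²η²K²`, then
`G ≤ (2L²C₃η² + 2(1-λ)²‖∇f(x̄)‖²) / ((1-λ)² - 32L²η²K²)`. -/
theorem grad_norm_self_bounding_resolution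
    {E : Type*} [NormedAddCommGroup E] [InnerProductSpace ℝ E] [CompleteSpace E]
    (m : ℕ) (hm : 1 ≤ m) (f : E → ℝ) (L : ℝ) (hL : 0 ≤ L)
    (hdiff : Differentiable ℝ f)
    (hlip : ∀ x y : E, ‖gradient f x - gradient f y‖ ≤ L * ‖x - y‖)
    (x : Fin m → E) (η K C₃ lam : ℝ)
    (hη : 0 ≤ η) (hK : 0 ≤ K) (hC₃ : 0 ≤ C₃) (hlam0 : 0 ≤ lam) (hlam1 : lam < 1)
    (G : ℝ) (hG : G = (1 / (m : ℝ)) * ∑ i, ‖gradient f (x i)‖ ^ 2)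
    (hcons : (1 / (m : ℝ)) * ∑ i, ‖x i - (m : ℝ)⁻¹ • ∑ i', x i'‖ ^ 2 ≤
      (η ^ 2 / (1 - lam) ^ 2) * (C₃ + 16 * K ^ 2 * G))
    (hgap : 32 * L ^ 2 * η ^ 2 * K ^ 2 < (1 - lam) ^ 2) :
    G ≤ (2 * L ^ 2 * C₃ * η ^ 2 +
          2 * (1 - lam) ^ 2 * ‖gradient f ((m : ℝ)⁻¹ • ∑ i', x i')‖ ^ 2) /
        ((1 - lam) ^ 2 - 32 * L ^ 2 * η ^ 2 * K ^ 2) := by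
  set xb : E := (m : ℝ)⁻¹ • ∑ i', x i' with hxb
  have hm0 : (0:ℝ) < m := by exact_mod_cast hm
  have hmne : (m:ℝ) ≠ 0 := ne_of_gt hm0
  have hD : (0:ℝ) < (1 - lam) ^ 2 := by nlinarith
  set N : ℝ := ‖gradient f xb‖ ^ 2 with hN
  have hpt : ∀ i, ‖gradient f (x i)‖ ^ 2 ≤ 2 * L ^ 2 * ‖x i - xb‖ ^ 2 + 2 * N := by
    intro i
    have h1 : ‖gradient f (x i)‖ ≤ ‖gradient f (x i) - gradient f xb‖ + ‖gradient f xb‖ := by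
      simpa using norm_add_le (gradient f (x i) - gradient f xb) (gradient f xb)
    have h2 := hlip (x i) xb
    have h3 : ‖gradient f (x i)‖ ≤ L * ‖x i - xb‖ + ‖gradient f xb‖ := by linarith
    have h4 := pow_le_pow_left₀ (norm_nonneg (gradient f (x i))) h3 2
    rw [hN]
    nlinarith [sq_nonneg (L * ‖x i - xb‖ - ‖gradient f xb‖), h4]
  have hsum : ∑ i, ‖gradient f (x i)‖ ^ 2 ≤
      2 * L ^ 2 * ∑ i, ‖x i - xb‖ ^ 2 + (m : ℝ) * (2 * N) := by
    calc ∑ i, ‖gradient f (x i)‖ ^ 2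
        ≤ ∑ i, (2 * L ^ 2 * ‖x i - xb‖ ^ 2 + 2 * N) :=
          Finset.sum_le_sum fun i _ => hpt i
      _ = 2 * L ^ 2 * ∑ i, ‖x i - xb‖ ^ 2 + (m : ℝ) * (2 * N) := by
          rw [Finset.sum_add_distrib, ← Finset.mul_sum, Finset.sum_const,
            Finset.card_univ, Fintype.card_fin, nsmul_eq_mul]
  set S : ℝ := (1 / (m : ℝ)) * ∑ i, ‖x i - xb‖ ^ 2 with hS
  have hGle : G ≤ 2 * L ^ 2 * S + 2 * N := by
    rw [hG, hS]
    have := mul_le_mul_of_nonneg_left hsum (by positivity : (0:ℝ) ≤ 1 / (m:ℝ))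
    calc (1 / (m : ℝ)) * ∑ i, ‖gradient f (x i)‖ ^ 2
        ≤ (1 / (m : ℝ)) * (2 * L ^ 2 * ∑ i, ‖x i - xb‖ ^ 2 + (m : ℝ) * (2 * N)) := this
      _ = 2 * L ^ 2 * ((1 / (m : ℝ)) * ∑ i, ‖x i - xb‖ ^ 2) + 2 * N := by
          field_simp
  have hGle2 : G ≤ 2 * L ^ 2 * ((η ^ 2 / (1 - lam) ^ 2) * (C₃ + 16 * K ^ 2 * G)) + 2 * N := by
    have h2L : (0:ℝ) ≤ 2 * L ^ 2 := by positivity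
    have := mul_le_mul_of_nonneg_left hcons h2L
    linarith
  rw [le_div_iff₀ (by linarith)]
  have hkey : G * (1 - lam) ^ 2 ≤
      2 * L ^ 2 * (η ^ 2 * (C₃ + 16 * K ^ 2 * G)) + 2 * N * (1 - lam) ^ 2 := by
    have := mul_le_mul_of_nonneg_right hGle2 (le_of_lt hD)
    have hcanc : (η ^ 2 / (1 - lam) ^ 2) * (C₃ + 16 * K ^ 2 * G) * (1 - lam) ^ 2
        = η ^ 2 * (C₃ + 16 * K ^ 2 * G) := by
      field_simp [(sub_pos.mpr hlam1).ne']
    nlinarith [this]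
  calc G * ((1 - lam) ^ 2 - 32 * L ^ 2 * η ^ 2 * K ^ 2)
      = G * (1 - lam) ^ 2 - 2 * L ^ 2 * (η ^ 2 * (16 * K ^ 2 * G)) := by ring
    _ ≤ 2 * L ^ 2 * C₃ * η ^ 2 + 2 * (1 - lam) ^ 2 * N := by nlinarith [hkey]
end
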